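/- The space of bounded real sequences statistically convergent to 0 (i.e., c₀(Z) ∩ ℓ∞ where Z is the density-zero ideal) is not complemented in ℓ∞, i.e., there is no bounded linear projection from ℓ∞ onto it. -/

import Mathlib

open Set Filter

/-- An ideal on ω: closed under subsets and finite unions, contains all finite sets, ω ∉ I. -/
def IsIdeal (I : Set (Set ℕ)) : Prop :=
  (∀ A B : Set ℕ, A ∈ I → B ⊆ A → B ∈ I) ∧
  (∀ A ∈ I, ∀ B ∈ I, A ∪ B ∈ I) ∧
  (∀ A : Set ℕ, A.Finite → A ∈ I) ∧
  (Set.univ : Set ℕ) ∉ I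

/-- A real sequence is I-convergent to 0. -/
def IConvZero (I : Set (Set ℕ)) (x : ℕ → ℝ) : Prop :=
  ∀ ε : ℝ, 0 < ε → {n | ε ≤ |x n|} ∈ I

/-- c₀(I) ∩ ℓ∞ : bounded sequences I-convergent to 0 (ℓ∞ = bounded functions ℕ → ℝ, sup norm). -/
def c0I (I : Set (Set ℕ)) : Set (BoundedContinuousFunction ℕ ℝ) :=
  {x | IConvZero I (fun n => x n)}

/-- An I-mad family: I-positive sets, pairwise intersections in I, maximal. -/
def IMad (I : Set (Set ℕ)) (𝒜 : Set (Set ℕ)) : Prop :=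
  (∀ A ∈ 𝒜, A ∉ I) ∧
  (∀ A ∈ 𝒜, ∀ B ∈ 𝒜, A ≠ B → A ∩ B ∈ I) ∧
  (∀ X : Set ℕ, X ∉ I → ∃ A ∈ 𝒜, X ∩ A ∉ I)

/-- The indicator sequence 1_X as an element of ℓ∞. -/
noncomputable def ind (X : Set ℕ) : BoundedContinuousFunction ℕ ℝ :=
  BoundedContinuousFunction.ofNormedAddCommGroupDiscrete (X.indicator 1) 1 (by
    intro n
    by_cases h : n ∈ X <;> simp [Set.indicator_apply, h])

/-- The asymptotic density zero ideal Z. -/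
noncomputable def densityZeroIdeal : Set (Set ℕ) :=
  {S : Set ℕ | Filter.Tendsto
    (fun n : ℕ => (Nat.card ↑(S ∩ Set.Icc 1 n) : ℝ) / n) Filter.atTop (nhds 0)}

/-! ### Auxiliary lemmas -/

lemma ncard_Icc_nat (a b : ℕ) : (Set.Icc a b).ncard = b + 1 - a := by
  rw [← Nat.card_coe_set_eq, Nat.card_eq_card_toFinset, Set.toFinset_Icc, Nat.card_Icc]

lemma finite_mem_Z {S : Set ℕ} (h : S.Finite) : S ∈ densityZeroIdeal := by
  apply squeeze_zero (g := fun n : ℕ => (S.ncard : ℝ) / n)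
  · intro n; positivity
  · intro n
    rw [Nat.card_coe_set_eq]
    gcongr
    · exact Set.inter_subset_left
  · exact tendsto_const_div_atTop_nhds_zero_nat _

/-- An almost disjoint family of subsets of ℕ indexed by the reals. -/
noncomputable def Afam (r : ℝ) : Set ℕ :=
  Set.range (fun n : ℕ => Nat.pair n ⌊(n : ℝ) * Real.exp r⌋₊)

/-- Positive-upper-density sets, still pairwise finitely intersecting. -/
noncomputable def Bfam (r : ℝ) : Set ℕ :=
  {m | ∃ k ∈ Afam r, m ∈ Set.Ico (2 ^ k) (2 ^ (k + 1))}

lemma Afam_infinite (r : ℝ) : (Afam r).Infinite := by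
  apply Set.infinite_range_of_injective
  intro a b hab
  exact (Nat.pair_eq_pair.mp hab).1

lemma Afam_inter_finite {r s : ℝ} (h : r ≠ s) : (Afam r ∩ Afam s).Finite := by
  wlog hlt : Real.exp r < Real.exp s generalizing r s
  · rw [Set.inter_comm]
    refine this (Ne.symm h) (lt_of_le_of_ne (not_lt.mp hlt) ?_)
    simp [Real.exp_eq_exp]
    exact Ne.symm h
  set c := Real.exp r
  set d := Real.exp s
  have hd : 0 < d - c := by linarith
  apply Set.Finite.subset (Set.Finite.image (fun n : ℕ => Nat.pair n ⌊(n : ℝ) * c⌋₊)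
    (Set.finite_Iio ⌈(1 : ℝ) / (d - c)⌉₊))
  rintro x ⟨⟨n, rfl⟩, ⟨m, hm⟩⟩
  obtain ⟨rfl, hfl⟩ := Nat.pair_eq_pair.mp hm.symm
  refine ⟨n, ?_, rfl⟩
  simp only [Set.mem_Iio]
  by_contra hn
  push_neg at hn
  have h1 : (n : ℝ) * d - 1 < ⌊(n : ℝ) * d⌋₊ := Nat.sub_one_lt_floor _
  have h2 : (⌊(n : ℝ) * c⌋₊ : ℝ) ≤ (n : ℝ) * c := Nat.floor_le (by positivity)
  rw [hfl] at h2
  have hn' : (1 : ℝ) / (d - c) ≤ n := le_trans (Nat.le_ceil _) (by exact_mod_cast hn)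
  have : (1 : ℝ) ≤ n * (d - c) := by
    rw [div_le_iff₀ hd] at hn'; linarith
  nlinarith

lemma pow_mem_unique {k k' m : ℕ} (h : m ∈ Set.Ico (2 ^ k) (2 ^ (k + 1)))
    (h' : m ∈ Set.Ico (2 ^ k') (2 ^ (k' + 1))) : k = k' := by
  simp only [Set.mem_Ico, pow_succ] at h h'
  by_contra hne
  rcases Nat.lt_or_ge k k' with hlt | hge
  · have : (2:ℕ) ^ (k+1) ≤ 2 ^ k' := Nat.pow_le_pow_right (by norm_num) hlt
    omega
  · have hlt : k' < k := lt_of_le_of_ne hge (Ne.symm hne)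
    have : (2:ℕ) ^ (k'+1) ≤ 2 ^ k := Nat.pow_le_pow_right (by norm_num) hlt
    omega

lemma Bfam_inter_finite {r s : ℝ} (h : r ≠ s) : (Bfam r ∩ Bfam s).Finite := by
  have : Bfam r ∩ Bfam s ⊆ ⋃ k ∈ Afam r ∩ Afam s, Set.Ico (2 ^ k) (2 ^ (k + 1)) := by
    rintro m ⟨⟨k, hk, hm⟩, ⟨k', hk', hm'⟩⟩
    have := pow_mem_unique hm hm'
    subst this
    exact Set.mem_biUnion ⟨hk, hk'⟩ hm
  exact Set.Finite.subset (Set.Finite.biUnion (Afam_inter_finite h)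
    (fun k _ => Set.finite_Ico _ _)) this

lemma Bfam_not_Z (r : ℝ) : Bfam r ∉ densityZeroIdeal := by
  intro hmem
  have hev := (hmem.eventually (gt_mem_nhds (by norm_num : (0:ℝ) < 1/2)))
  rw [eventually_atTop] at hev
  obtain ⟨N, hN⟩ := hev
  obtain ⟨k, hk, hkN⟩ := (Afam_infinite r).exists_gt N
  set n := 2 ^ (k + 1) - 1 with hn
  have h2k1 : 1 ≤ 2 ^ (k+1) := Nat.one_le_two_pow
  have hkn : k ≤ n := by
    have : k < 2 ^ k := Nat.lt_two_pow_self
    have : (2:ℕ)^k ≤ 2^(k+1) := Nat.pow_le_pow_right (by norm_num) (Nat.le_succ _)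
    omega
  have hNn : N ≤ n := le_trans hkN.le hkn
  have hsub : Set.Icc (2 ^ k) n ⊆ Bfam r ∩ Set.Icc 1 n := by
    intro m hm
    rcases hm with ⟨h1, h2⟩
    refine ⟨⟨k, hk, h1, by omega⟩, ⟨le_trans Nat.one_le_two_pow h1, h2⟩⟩
  have hfin : (Bfam r ∩ Set.Icc 1 n).Finite :=
    Set.Finite.subset (Set.finite_Icc 1 n) Set.inter_subset_right
  have hcard : 2 ^ k ≤ (Bfam r ∩ Set.Icc 1 n).ncard := by
    have := Set.ncard_le_ncard hsub hfin
    rwa [_root_.ncard_Icc_nat, show n + 1 - 2 ^ k = 2 ^ k by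
      rw [hn]; have : 2^(k+1) = 2 * 2^k := by ring
      omega] at this
  have hlt := hN n hNn
  rw [Nat.card_coe_set_eq] at hlt
  have hnpos : (0:ℝ) < (n:ℝ) := by
    have : 1 ≤ n := by omega
    exact_mod_cast Nat.lt_of_lt_of_le Nat.zero_lt_one this
  rw [div_lt_iff₀ hnpos] at hlt
  have hcast : ((Bfam r ∩ Set.Icc 1 n).ncard : ℝ) ≥ (2:ℝ) ^ k := by exact_mod_cast hcard
  have hnle : (n:ℝ) ≤ 2 * 2 ^ k := by
    have : (n:ℕ) ≤ 2 ^ (k+1) := by omega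
    calc (n:ℝ) ≤ ((2:ℕ) ^ (k+1) : ℕ) := by exact_mod_cast this
    _ = 2 * 2 ^ k := by push_cast; ring
  nlinarith [pow_pos (by norm_num : (0:ℝ) < 2) k]

lemma ind_apply (X : Set ℕ) (n : ℕ) : (ind X) n = X.indicator 1 n := rfl

lemma mem_c0I_of_finite {f : BoundedContinuousFunction ℕ ℝ}
    (h : {n | f n ≠ 0}.Finite) : f ∈ c0I densityZeroIdeal := by
  intro ε hε
  apply finite_mem_Z
  apply h.subset
  intro n hn
  simp only [Set.mem_setOf_eq] at hn ⊢
  intro h0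
  rw [h0] at hn
  simp at hn
  linarith

lemma ind_not_mem_c0I (r : ℝ) : ind (Bfam r) ∉ c0I densityZeroIdeal := by
  intro hmem
  have h1 := hmem 1 one_pos
  have : {n | (1:ℝ) ≤ |(ind (Bfam r)) n|} = Bfam r := by
    ext n
    simp only [Set.mem_setOf_eq, ind_apply, Set.indicator_apply]
    by_cases h : n ∈ Bfam r <;> simp [h]
  rw [this] at h1
  exact Bfam_not_Z r h1

open BoundedContinuousFunction in
lemma key_finite (T : BoundedContinuousFunction ℕ ℝ →L[ℝ] BoundedContinuousFunction ℕ ℝ)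
    (hT0 : ∀ x ∈ c0I densityZeroIdeal, T x = 0) (n : ℕ) {ε : ℝ} (hε : 0 < ε) :
    {r : ℝ | ε ≤ |(T (ind (Bfam r))) n|}.Finite := by
  classical
  by_contra hfin
  have hS : {r : ℝ | ε ≤ |(T (ind (Bfam r))) n|}.Infinite := hfin
  set N : ℕ := ⌊‖T‖ / ε⌋₊ + 1 with hNdef
  obtain ⟨F, hFsub, hFcard⟩ := hS.exists_subset_card_eq N
  set sgn : ℝ → ℝ := fun r => if 0 ≤ (T (ind (Bfam r))) n then 1 else -1 with hsgn
  set y : BoundedContinuousFunction ℕ ℝ := ∑ r ∈ F, sgn r • ind (Bfam r) with hy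
  -- value of T y at n
  have hTy : (T y) n = ∑ r ∈ F, |(T (ind (Bfam r))) n| := by
    have : T y = ∑ r ∈ F, sgn r • T (ind (Bfam r)) := by
      rw [hy, map_sum]
      exact Finset.sum_congr rfl fun r _ => map_smul T _ _
    rw [this]
    rw [show ((∑ r ∈ F, sgn r • T (ind (Bfam r))) : BoundedContinuousFunction ℕ ℝ) n
        = ∑ r ∈ F, (sgn r • T (ind (Bfam r))) n by
      rw [coe_sum]; exact Finset.sum_apply _ _ _]
    refine Finset.sum_congr rfl fun r _ => ?_
    rw [coe_smul]
    simp only [Pi.smul_apply, smul_eq_mul, hsgn]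
    by_cases h : 0 ≤ (T (ind (Bfam r))) n
    · rw [if_pos h, one_mul, abs_of_nonneg h]
    · rw [if_neg h, abs_of_neg (not_le.mp h)]; ring
  have hlow : ε * N ≤ (T y) n := by
    rw [hTy]
    calc ε * N = N • ε := by rw [nsmul_eq_mul]; ring
    _ = F.card • ε := by rw [hFcard]
    _ ≤ ∑ r ∈ F, |(T (ind (Bfam r))) n| :=
        Finset.card_nsmul_le_sum F _ _ fun r hr => hFsub hr
  -- the exceptional finite set
  set E : Set ℕ :=
    ⋃ p ∈ ((F ×ˢ F).filter fun p : ℝ × ℝ => p.1 ≠ p.2), Bfam p.1 ∩ Bfam p.2 with hE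
  have hEfin : E.Finite := by
    apply Set.Finite.biUnion (Finset.finite_toSet _)
    intro p hp
    rw [Finset.coe_filter, Set.mem_setOf_eq] at hp
    exact Bfam_inter_finite hp.2
  -- the truncated function
  set g : ℕ → ℝ := fun m => if m ∈ E then 0 else y m with hg
  have hyval : ∀ m : ℕ, y m = ∑ r ∈ F, sgn r * (Bfam r).indicator 1 m := by
    intro m
    rw [hy, coe_sum]
    rw [Finset.sum_apply]
    refine Finset.sum_congr rfl fun r _ => ?_
    rw [coe_smul]
    simp [ind_apply]
  have hgb : ∀ m : ℕ, ‖g m‖ ≤ 1 := by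
    intro m
    rw [hg]
    by_cases hm : m ∈ E
    · simp [hm]
    · simp only [if_neg hm]
      rw [hyval]
      by_cases hex : ∃ r ∈ F, m ∈ Bfam r
      · obtain ⟨r₀, hr₀F, hr₀m⟩ := hex
        rw [Finset.sum_eq_single_of_mem r₀ hr₀F]
        · rw [Set.indicator_of_mem hr₀m, Pi.one_apply, mul_one, hsgn]
          by_cases h : 0 ≤ (T (ind (Bfam r₀))) n <;> simp [h]
        · intro s hsF hne
          have hms : m ∉ Bfam s := by
            intro hmem
            apply hm
            rw [hE]
            simp only [Set.mem_iUnion]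
            exact ⟨(s, r₀), Finset.mem_filter.mpr
              ⟨Finset.mem_product.mpr ⟨hsF, hr₀F⟩, hne⟩, ⟨hmem, hr₀m⟩⟩
          rw [Set.indicator_of_notMem hms, mul_zero]
      · push_neg at hex
        rw [Finset.sum_eq_zero]
        · simp
        · intro s hsF
          rw [Set.indicator_of_notMem (hex s hsF), mul_zero]
  set y' : BoundedContinuousFunction ℕ ℝ :=
    BoundedContinuousFunction.ofNormedAddCommGroupDiscrete g 1 hgb with hy'
  have hy'coe : ∀ m, y' m = g m := fun m => rfl
  have hy'norm : ‖y'‖ ≤ 1 :=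
    BoundedContinuousFunction.norm_ofNormedAddCommGroup_le _ zero_le_one hgb
  have hdiff : y - y' ∈ c0I densityZeroIdeal := by
    apply mem_c0I_of_finite
    apply hEfin.subset
    intro m hm
    simp only [Set.mem_setOf_eq] at hm
    by_contra hmE
    apply hm
    rw [coe_sub, Pi.sub_apply, hy'coe, hg]
    simp only [if_neg hmE, sub_self]
  have hTeq : T y = T y' := by
    have h := hT0 _ hdiff
    rw [map_sub] at h
    exact sub_eq_zero.mp h
  have hub : (T y') n ≤ ‖T‖ := by
    calc (T y') n ≤ |(T y') n| := le_abs_self _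
    _ ≤ ‖T y'‖ := by
        rw [← Real.norm_eq_abs]
        exact BoundedContinuousFunction.norm_coe_le_norm _ _
    _ ≤ ‖T‖ * ‖y'‖ := T.le_opNorm _
    _ ≤ ‖T‖ * 1 := mul_le_mul_of_nonneg_left hy'norm (norm_nonneg T)
    _ = ‖T‖ := mul_one _
  have hNbig : ‖T‖ < ε * N := by
    have h1 : ‖T‖ / ε < N := by
      rw [hNdef]
      push_cast
      exact Nat.lt_floor_add_one _
    rwa [div_lt_iff₀ hε, mul_comm] at h1
  rw [hTeq] at hlow
  linarith

/-- the bounded sequences statistically convergent to 0 are not complemented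
in ℓ∞. -/
theorem no_projection_onto_statConv :
    ¬ ∃ π : BoundedContinuousFunction ℕ ℝ →L[ℝ] BoundedContinuousFunction ℕ ℝ,
        Set.range π = c0I densityZeroIdeal ∧
        ∀ x ∈ c0I densityZeroIdeal, π x = x := by
  rintro ⟨π, hrange, hfix⟩
  set T : BoundedContinuousFunction ℕ ℝ →L[ℝ] BoundedContinuousFunction ℕ ℝ :=
    ContinuousLinearMap.id ℝ _ - π with hT
  have hT0 : ∀ x ∈ c0I densityZeroIdeal, T x = 0 := by
    intro x hx
    rw [hT, ContinuousLinearMap.sub_apply, ContinuousLinearMap.id_apply, hfix x hx, sub_self]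
  -- Step A : T (ind (Bfam r)) ≠ 0 for each r
  have hA : ∀ r : ℝ, ∃ n : ℕ, (T (ind (Bfam r))) n ≠ 0 := by
    intro r
    by_contra hall
    push_neg at hall
    have hTz : T (ind (Bfam r)) = 0 := by
      ext n; exact hall n
    rw [hT, ContinuousLinearMap.sub_apply, ContinuousLinearMap.id_apply, sub_eq_zero] at hTz
    have : ind (Bfam r) ∈ Set.range π := ⟨ind (Bfam r), hTz.symm⟩
    rw [hrange] at this
    exact ind_not_mem_c0I r this
  -- Step C : countable union covering ℝ
  have hcover : (Set.univ : Set ℝ) ⊆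
      ⋃ n : ℕ, ⋃ m : ℕ, {r : ℝ | 1 / (m + 1 : ℝ) ≤ |(T (ind (Bfam r))) n|} := by
    intro r _
    obtain ⟨n, hn⟩ := hA r
    obtain ⟨m, hm⟩ := exists_nat_one_div_lt (abs_pos.mpr hn)
    exact Set.mem_iUnion.mpr ⟨n, Set.mem_iUnion.mpr ⟨m, hm.le⟩⟩
  have hcount : (⋃ n : ℕ, ⋃ m : ℕ,
      {r : ℝ | 1 / (m + 1 : ℝ) ≤ |(T (ind (Bfam r))) n|}).Countable := by
    apply Set.countable_iUnion
    intro n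
    apply Set.countable_iUnion
    intro m
    exact (key_finite T hT0 n (by positivity)).countable
  exact Cardinal.not_countable_real (Set.Countable.mono hcover hcount)
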